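/- arXiv:1810.07478 — 2 statements merged into one kernel-verified Lean document; each statement's English description precedes it below -/
import Mathlib

section
/- The value C₂ = Σ_{n=1}^∞ χ₆(n)/n² satisfies C₂ = (5/√27) · Cl₂(π/3), where Cl₂(π/3) = Σ_{m=1}^∞ sin(mπ/3)/m² is the Clausen value; that is, Σ_{n=1}^∞ χ₆(n)/n² = (5/√27) Σ_{m=1}^∞ sin(mπ/3)/m². -/
open scoped BigOperators Real

/-- The primitive Dirichlet character modulo 6: `χ₆(n) = 1` if `n ≡ 1 (mod 6)`,
`χ₆(n) = -1` if `n ≡ 5 (mod 6)`, and `0` otherwise. -/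
def chi6 (n : ℕ) : ℝ :=
  if n % 6 = 1 then 1 else if n % 6 = 5 then -1 else 0

/-- nontrivial character mod 3 -/
def chi3 (n : ℕ) : ℝ :=
  if n % 3 = 1 then 1 else if n % 3 = 2 then -1 else 0

/-- sign pattern of `sin (nπ/3)` up to a factor `√3/2` -/
def c6 (n : ℕ) : ℝ :=
  if n % 6 = 1 ∨ n % 6 = 2 then 1 else if n % 6 = 4 ∨ n % 6 = 5 then -1 else 0

lemma summable_aux (w : ℕ → ℝ) (hw : ∀ n, |w n| ≤ 1) :
    Summable (fun n : ℕ => w n / (n : ℝ) ^ 2) := by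
  apply Summable.of_abs
  apply Summable.of_nonneg_of_le (fun n => abs_nonneg _) (fun n => ?_)
    ((Real.summable_one_div_nat_pow (p := 2)).mpr one_lt_two)
  rcases n with _ | n
  · simp
  · rw [abs_div, abs_pow, Nat.abs_cast]
    gcongr
    exact hw _

lemma abs_chi6 (n : ℕ) : |chi6 n| ≤ 1 := by
  unfold chi6; split_ifs <;> norm_num

lemma abs_chi3 (n : ℕ) : |chi3 n| ≤ 1 := by
  unfold chi3; split_ifs <;> norm_num

lemma abs_c6 (n : ℕ) : |c6 n| ≤ 1 := by
  unfold c6; split_ifs <;> norm_num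

lemma c6_even (k : ℕ) : c6 (2 * k) = chi3 k := by
  unfold c6 chi3
  have h6 : 2 * k % 6 = 2 * (k % 3) := by omega
  rcases (show k % 3 = 0 ∨ k % 3 = 1 ∨ k % 3 = 2 by omega) with h | h | h <;>
    rw [h6, h] <;> norm_num

lemma c6_odd (k : ℕ) : c6 (2 * k + 1) = chi6 (2 * k + 1) := by
  unfold c6 chi6
  have h6 : (2 * k + 1) % 6 = 2 * (k % 3) + 1 := by omega
  rcases (show k % 3 = 0 ∨ k % 3 = 1 ∨ k % 3 = 2 by omega) with h | h | h <;>
    rw [h6, h] <;> norm_num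

lemma chi6_even (k : ℕ) : chi6 (2 * k) = 0 := by
  unfold chi6
  have h1 : 2 * k % 6 ≠ 1 := by omega
  have h5 : 2 * k % 6 ≠ 5 := by omega
  simp [h1, h5]

lemma chi3_even (k : ℕ) : chi3 (2 * k) = -chi3 k := by
  unfold chi3
  have h6 : 2 * k % 3 = 2 * (k % 3) % 3 := by omega
  rcases (show k % 3 = 0 ∨ k % 3 = 1 ∨ k % 3 = 2 by omega) with h | h | h <;>
    rw [h6, h] <;> norm_num

lemma chi3_odd (k : ℕ) : chi3 (2 * k + 1) = chi6 (2 * k + 1) := by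
  unfold chi3 chi6
  have h6 : (2 * k + 1) % 6 = 2 * (k % 3) + 1 := by omega
  have h3 : (2 * k + 1) % 3 = (2 * (k % 3) + 1) % 3 := by omega
  rcases (show k % 3 = 0 ∨ k % 3 = 1 ∨ k % 3 = 2 by omega) with h | h | h <;>
    rw [h6, h3, h] <;> norm_num

lemma sin_eq (n : ℕ) : Real.sin ((n : ℝ) * π / 3) = Real.sqrt 3 / 2 * c6 n := by
  obtain ⟨q, r, hr, rfl⟩ : ∃ q r, r < 6 ∧ n = 6 * q + r :=
    ⟨n / 6, n % 6, Nat.mod_lt _ (by norm_num), by omega⟩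
  have key : ((6 * q + r : ℕ) : ℝ) * π / 3 = (r : ℝ) * π / 3 + (q : ℕ) * (2 * π) := by
    push_cast; ring
  rw [key, Real.sin_add_nat_mul_two_pi]
  have hc : c6 (6 * q + r) = c6 r := by
    unfold c6; rw [show (6 * q + r) % 6 = r % 6 by omega]
  rw [hc]
  interval_cases r
  · simp [c6]
  · rw [show ((1 : ℕ) : ℝ) * π / 3 = π / 3 by push_cast; ring, Real.sin_pi_div_three]
    norm_num [c6]
  · rw [show ((2 : ℕ) : ℝ) * π / 3 = π - π / 3 by push_cast; ring, Real.sin_pi_sub,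
      Real.sin_pi_div_three]
    norm_num [c6]
  · rw [show ((3 : ℕ) : ℝ) * π / 3 = π by push_cast; ring, Real.sin_pi]
    norm_num [c6]
  · rw [show ((4 : ℕ) : ℝ) * π / 3 = π / 3 + π by push_cast; ring, Real.sin_add_pi,
      Real.sin_pi_div_three]
    norm_num [c6]
  · rw [show ((5 : ℕ) : ℝ) * π / 3 = -(π / 3) + ((1 : ℕ) : ℝ) * (2 * π) by push_cast; ring,
      Real.sin_add_nat_mul_two_pi, Real.sin_neg, Real.sin_pi_div_three]
    norm_num [c6]

/-- `C₂ = Σ_{n≥1} χ₆(n)/n² = (5/√27)·Cl₂(π/3)`, where `Cl₂(π/3) = Σ_{m≥1} sin(mπ/3)/m²`. -/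
theorem C2_eq_clausen :
    ∑' n : ℕ, chi6 (n + 1) / ((n : ℝ) + 1) ^ 2 =
      (5 / Real.sqrt 27) * ∑' m : ℕ, Real.sin (((m : ℝ) + 1) * π / 3) / ((m : ℝ) + 1) ^ 2 := by
  set f : ℕ → ℝ := fun n => chi6 n / (n : ℝ) ^ 2 with hf
  set g : ℕ → ℝ := fun n => chi3 n / (n : ℝ) ^ 2 with hg
  set t : ℕ → ℝ := fun n => c6 n / (n : ℝ) ^ 2 with ht
  have hfs : Summable f := summable_aux _ abs_chi6
  have hgs : Summable g := summable_aux _ abs_chi3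
  have hts : Summable t := summable_aux _ abs_c6
  have hinj : Function.Injective (fun k : ℕ => 2 * k + 1) := fun a b h => by
    simpa using h
  -- even parts
  have hfe : ∀ k, f (2 * k) = 0 := fun k => by simp [hf, chi6_even]
  have hte : ∀ k, t (2 * k) = 1 / 4 * g k := fun k => by
    simp only [ht, hg, c6_even]
    push_cast
    ring
  have hge : ∀ k, g (2 * k) = -(1 / 4) * g k := fun k => by
    simp only [hg, chi3_even]
    push_cast
    ring
  -- odd parts agree
  have hto : ∀ k, t (2 * k + 1) = f (2 * k + 1) := fun k => by
    simp only [ht, hf, c6_odd]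
  have hgo : ∀ k, g (2 * k + 1) = f (2 * k + 1) := fun k => by
    simp only [hg, hf, chi3_odd]
  have hfo : Summable fun k => f (2 * k + 1) := hfs.comp_injective hinj
  set C := ∑' n, f n with hC
  set L := ∑' n, g n with hL
  set T := ∑' n, t n with hT
  set O := ∑' k, f (2 * k + 1) with hO
  have eqC : C = O := by
    rw [hC, ← tsum_even_add_odd (by simpa [funext hfe] using summable_zero) hfo]
    simp [funext hfe]
    rfl
  have eqT : T = 1 / 4 * L + O := by
    rw [hT, ← tsum_even_add_odd
      (by rw [funext hte]; exact hgs.mul_left _)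
      (by rw [funext hto]; exact hfo)]
    rw [funext hte, funext hto, tsum_mul_left, ← hL, ← hO]
  have eqL : L = -(1 / 4) * L + O := by
    nth_rewrite 1 [hL]
    rw [← tsum_even_add_odd
      (by rw [funext hge]; exact hgs.mul_left _)
      (by rw [funext hgo]; exact hfo)]
    rw [funext hge, funext hgo, tsum_mul_left, ← hL, ← hO]
  have hLC : L = 4 / 5 * C := by linarith [eqL, eqC]
  have hTC : T = 6 / 5 * C := by rw [eqT, hLC, eqC]; ring
  -- identify the two series in the statement
  have lhs_eq : ∑' n : ℕ, chi6 (n + 1) / ((n : ℝ) + 1) ^ 2 = C := by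
    have h0 : f 0 = 0 := by simp [hf, chi6]
    rw [hC, Summable.tsum_eq_zero_add hfs, h0, zero_add]
    apply tsum_congr
    intro n
    simp only [hf]
    push_cast
    ring_nf
  have rhs_eq : ∑' m : ℕ, Real.sin (((m : ℝ) + 1) * π / 3) / ((m : ℝ) + 1) ^ 2
      = Real.sqrt 3 / 2 * T := by
    have hss : Summable fun n : ℕ => Real.sin ((n : ℝ) * π / 3) / (n : ℝ) ^ 2 := by
      have : (fun n : ℕ => Real.sin ((n : ℝ) * π / 3) / (n : ℝ) ^ 2)
          = fun n => Real.sqrt 3 / 2 * t n := by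
        funext n; rw [sin_eq]; simp only [ht]; ring
      rw [this]; exact hts.mul_left _
    have h0 : Real.sin ((0 : ℕ) * π / 3) / ((0 : ℕ) : ℝ) ^ 2 = 0 := by norm_num
    calc ∑' m : ℕ, Real.sin (((m : ℝ) + 1) * π / 3) / ((m : ℝ) + 1) ^ 2
        = ∑' m : ℕ, Real.sin (((m + 1 : ℕ) : ℝ) * π / 3) / ((m + 1 : ℕ) : ℝ) ^ 2 := by
          apply tsum_congr; intro m; push_cast; ring_nf
      _ = ∑' n : ℕ, Real.sin ((n : ℝ) * π / 3) / (n : ℝ) ^ 2 := by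
          rw [Summable.tsum_eq_zero_add hss, h0, zero_add]
      _ = ∑' n : ℕ, Real.sqrt 3 / 2 * t n := by
          apply tsum_congr; intro n; rw [sin_eq]; simp only [ht]; ring
      _ = Real.sqrt 3 / 2 * T := by rw [tsum_mul_left, hT]
  rw [lhs_eq, rhs_eq, hTC]
  have h27 : Real.sqrt 27 = 3 * Real.sqrt 3 := by
    rw [show (27 : ℝ) = 3 ^ 2 * 3 by norm_num, Real.sqrt_mul (by positivity),
      Real.sqrt_sq (by norm_num)]
  have h3 : Real.sqrt 3 ≠ 0 := by positivity
  rw [h27]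
  field_simp
  ring
end

section
/- For all positive integers c, N, M, n with gcd(c, N) = 1, the Kloosterman-type sum satisfies the symmetry K(c, N, M, n) = K(c, N, n, M); consequently the Rademacher sums satisfy R_{N,M}(n)/M = R_{N,n}(M)/n termwise in c. -/
open scoped BigOperators Real

/-- The Kloosterman-type sum `K(c,N,M,n) = Σ_{r∈[1,c], gcd(r,c)=1} e^{2πi(Mr - ns)/c}`,
where `s` is the inverse of `N·r` modulo `c`. -/
noncomputable def kloosterman (c N M n : ℕ) : ℂ :=
  ∑ r ∈ (Finset.Icc 1 c).filter fun r => Nat.Coprime r c,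
    Complex.exp (2 * Real.pi * Complex.I *
      ((M : ℂ) * (r : ℂ) - (n : ℂ) * ((((N * r : ℕ) : ZMod c)⁻¹).val : ℂ)) / (c : ℂ))

/-- The modified Bessel function `I₁(x) = Σ_{k≥0} (x/2)^{2k+1}/(k!(k+1)!)`. -/
noncomputable def besselI1 (x : ℝ) : ℝ :=
  ∑' k : ℕ, (x / 2) ^ (2 * k + 1) / ((Nat.factorial k : ℝ) * (Nat.factorial (k + 1) : ℝ))

/-- The `c`-th term of the Rademacher sum `R_{N,M}(n)`. -/
noncomputable def rademacherTerm (N M n c : ℕ) : ℂ :=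
  ((2 * Real.pi * besselI1 (4 * Real.pi * Real.sqrt ((n : ℝ) * M / N) / c) /
      (Real.sqrt ((n : ℝ) * N / M) * c) : ℝ) : ℂ) * kloosterman c N M n

lemma exp_congr_aux (c : ℕ) (hc : 0 < c) (a b : ℤ) (hab : (a : ZMod c) = (b : ZMod c)) :
    Complex.exp (2 * Real.pi * Complex.I * (a : ℂ) / c) =
    Complex.exp (2 * Real.pi * Complex.I * (b : ℂ) / c) := by
  haveI : NeZero c := ⟨hc.ne'⟩
  obtain ⟨k, hk⟩ : (c : ℤ) ∣ a - b := by
    rwa [← ZMod.intCast_zmod_eq_zero_iff_dvd, Int.cast_sub, sub_eq_zero]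
  have ha : a = b + c * k := by linarith
  have hcne : (c : ℂ) ≠ 0 := Nat.cast_ne_zero.mpr hc.ne'
  rw [ha]
  push_cast
  rw [show 2 * (Real.pi : ℂ) * Complex.I * ((b : ℂ) + (c : ℂ) * (k : ℂ)) / (c : ℂ)
      = 2 * (Real.pi : ℂ) * Complex.I * (b : ℂ) / (c : ℂ) + (k : ℂ) * (2 * (Real.pi : ℂ) * Complex.I) by
    field_simp]
  rw [Complex.exp_add, Complex.exp_int_mul_two_pi_mul_I, mul_one]

lemma kloosterman_symm_aux (c N M n : ℕ) (hc : 0 < c) (h : Nat.Coprime c N) :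
    kloosterman c N M n = kloosterman c N n M := by
  haveI : NeZero c := ⟨hc.ne'⟩
  unfold kloosterman
  have hmem : ∀ r ∈ (Finset.Icc 1 c).filter fun r => Nat.Coprime r c,
      c - (((N * r : ℕ) : ZMod c)⁻¹).val ∈ (Finset.Icc 1 c).filter fun r => Nat.Coprime r c := by
    intro r hr
    simp only [Finset.mem_filter, Finset.mem_Icc] at hr ⊢
    obtain ⟨⟨hr1, hrc⟩, hcop⟩ := hr
    set u : ZMod c := ((N * r : ℕ) : ZMod c) with hu
    have hunit : IsUnit u := by
      rw [hu, ZMod.isUnit_iff_coprime]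
      exact Nat.Coprime.mul h.symm hcop
    have hslt : (u⁻¹).val < c := ZMod.val_lt _
    have hunit' : IsUnit u⁻¹ := IsUnit.of_mul_eq_one _ (ZMod.inv_mul_of_unit u hunit)
    have hcast : (((c - (u⁻¹).val : ℕ)) : ZMod c) = -u⁻¹ := by
      rw [Nat.cast_sub hslt.le, ZMod.natCast_self, ZMod.natCast_val, ZMod.cast_id, zero_sub]
    refine ⟨⟨by omega, by omega⟩, ?_⟩
    rw [← ZMod.isUnit_iff_coprime, hcast]
    exact hunit'.neg
  have hinv : ∀ r ∈ (Finset.Icc 1 c).filter fun r => Nat.Coprime r c,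
      (((N * (c - (((N * r : ℕ) : ZMod c)⁻¹).val) : ℕ) : ZMod c)⁻¹) = -(r : ZMod c) := by
    intro r hr
    simp only [Finset.mem_filter, Finset.mem_Icc] at hr
    obtain ⟨⟨hr1, hrc⟩, hcop⟩ := hr
    set u : ZMod c := ((N * r : ℕ) : ZMod c) with hu
    have hunit : IsUnit u := by
      rw [hu, ZMod.isUnit_iff_coprime]
      exact Nat.Coprime.mul h.symm hcop
    have hslt : (u⁻¹).val < c := ZMod.val_lt _
    apply ZMod.inv_eq_of_mul_eq_one
    have hcast : (((c - (u⁻¹).val : ℕ)) : ZMod c) = -u⁻¹ := by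
      rw [Nat.cast_sub hslt.le, ZMod.natCast_self, ZMod.natCast_val, ZMod.cast_id, zero_sub]
    have e1 : ((N * (c - (u⁻¹).val) : ℕ) : ZMod c) = (N : ZMod c) * -u⁻¹ := by
      push_cast [hcast]; rfl
    rw [e1]
    have e2 : (N : ZMod c) * -u⁻¹ * -(r : ZMod c) = u⁻¹ * u := by
      rw [hu]; push_cast; ring
    rw [e2, ZMod.inv_mul_of_unit u hunit]
  have hinvol : ∀ r ∈ (Finset.Icc 1 c).filter fun r => Nat.Coprime r c,
      c - (((N * (c - (((N * r : ℕ) : ZMod c)⁻¹).val) : ℕ) : ZMod c)⁻¹).val = r := by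
    intro r hr
    have h2 := hinv r hr
    simp only [Finset.mem_filter, Finset.mem_Icc] at hr
    obtain ⟨⟨hr1, hrc⟩, hcop⟩ := hr
    rw [h2, ZMod.neg_val]
    rcases eq_or_lt_of_le hrc with hrc' | hrc'
    · have h0 : ((r : ℕ) : ZMod c) = 0 := by rw [hrc', ZMod.natCast_self]
      rw [if_pos h0, Nat.sub_zero, hrc']
    · have hne : ((r : ℕ) : ZMod c) ≠ 0 := by
        intro h0
        have := (ZMod.natCast_eq_zero_iff r c).mp h0
        have := Nat.le_of_dvd (by omega) this
        omega
      rw [if_neg hne, ZMod.val_natCast, Nat.mod_eq_of_lt hrc']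
      omega
  refine Finset.sum_nbij' (fun r => c - (((N * r : ℕ) : ZMod c)⁻¹).val)
    (fun r => c - (((N * r : ℕ) : ZMod c)⁻¹).val) hmem hmem hinvol hinvol ?_
  intro r hr
  have h2 := hinv r hr
  simp only [Finset.mem_filter, Finset.mem_Icc] at hr
  obtain ⟨⟨hr1, hrc⟩, hcop⟩ := hr
  set u : ZMod c := ((N * r : ℕ) : ZMod c) with hu
  have hunit : IsUnit u := by
    rw [hu, ZMod.isUnit_iff_coprime]
    exact Nat.Coprime.mul h.symm hcop
  have hslt : (u⁻¹).val < c := ZMod.val_lt _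
  beta_reduce
  rw [h2]
  set s := (u⁻¹).val with hs
  set s' := ((-(r : ZMod c))).val with hs'
  have hA : ((M : ℂ) * (r : ℂ) - (n : ℂ) * (s : ℂ)) = (((M * r - n * s : ℤ)) : ℂ) := by
    push_cast; ring
  have hB : ((n : ℂ) * ((c - s : ℕ) : ℂ) - (M : ℂ) * (s' : ℂ))
      = (((n * (c - s : ℕ) - M * s' : ℤ)) : ℂ) := by push_cast; ring
  rw [hA, hB]
  apply exp_congr_aux c hc
  have h1 : ((s : ℕ) : ZMod c) = u⁻¹ := by rw [hs, ZMod.natCast_val, ZMod.cast_id]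
  have h2' : ((s' : ℕ) : ZMod c) = -(r : ZMod c) := by rw [hs', ZMod.natCast_val, ZMod.cast_id]
  have hsc : (s : ℤ) ≤ (c : ℤ) := by exact_mod_cast hslt.le
  push_cast [Nat.cast_sub hslt.le]
  rw [h1, h2', ZMod.natCast_self]
  ring

/-- Symmetry of the Kloosterman sum `K(c,N,M,n) = K(c,N,n,M)`; consequently the Rademacher
sums satisfy `R_{N,M}(n)/M = R_{N,n}(M)/n` termwise in `c`. -/
theorem kloosterman_symm (c N M n : ℕ) (hc : 0 < c) (hN : 0 < N) (hM : 0 < M)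
    (hn : 0 < n) (h : Nat.Coprime c N) :
    kloosterman c N M n = kloosterman c N n M ∧
      rademacherTerm N M n c / (M : ℂ) = rademacherTerm N n M c / (n : ℂ) := by
  have hK := kloosterman_symm_aux c N M n hc h
  refine ⟨hK, ?_⟩
  have hMr : (0:ℝ) < M := by exact_mod_cast hM
  have hnr : (0:ℝ) < n := by exact_mod_cast hn
  have hNr : (0:ℝ) < N := by exact_mod_cast hN
  have hcr : (0:ℝ) < c := by exact_mod_cast hc
  -- the Bessel arguments agree
  have hx : (4 * Real.pi * Real.sqrt ((n : ℝ) * M / N) / c)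
      = (4 * Real.pi * Real.sqrt ((M : ℝ) * n / N) / c) := by
    rw [mul_comm (n : ℝ) (M : ℝ)]
  -- key sqrt identity
  have e1 : Real.sqrt ((n : ℝ) * N / M) * M = Real.sqrt ((n : ℝ) * N * M) := by
    rw [← Real.sqrt_sq hMr.le, ← Real.sqrt_mul (by positivity)]
    congr 1; field_simp; rw [Real.sq_sqrt (by positivity)]
  have e2 : Real.sqrt ((M : ℝ) * N / n) * n = Real.sqrt ((M : ℝ) * N * n) := by
    rw [← Real.sqrt_sq hnr.le, ← Real.sqrt_mul (by positivity)]
    congr 1; field_simp; rw [Real.sq_sqrt (by positivity)]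
  have e3 : Real.sqrt ((n : ℝ) * N * M) = Real.sqrt ((M : ℝ) * N * n) := by
    congr 1; ring
  set B := besselI1 (4 * Real.pi * Real.sqrt ((M : ℝ) * n / N) / c) with hB
  have coefeq : (2 * Real.pi * B / (Real.sqrt ((n : ℝ) * N / M) * c)) / M
      = (2 * Real.pi * B / (Real.sqrt ((M : ℝ) * N / n) * c)) / n := by
    rw [div_div, div_div]
    have d1 : Real.sqrt ((n : ℝ) * N / M) * c * M = Real.sqrt ((n : ℝ) * N * M) * c := by
      rw [← e1]; ring
    have d2 : Real.sqrt ((M : ℝ) * N / n) * c * n = Real.sqrt ((M : ℝ) * N * n) * c := by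
      rw [← e2]; ring
    rw [d1, d2, e3]
  unfold rademacherTerm
  rw [hK, hx]
  rw [div_eq_div_iff (by exact_mod_cast hM.ne' : (M:ℂ) ≠ 0) (by exact_mod_cast hn.ne' : (n:ℂ) ≠ 0)]
  have cross : (2 * Real.pi * B / (Real.sqrt ((n : ℝ) * N / M) * c)) * n
      = (2 * Real.pi * B / (Real.sqrt ((M : ℝ) * N / n) * c)) * M :=
    (div_eq_div_iff hMr.ne' hnr.ne').mp coefeq
  have crossC : ((2 * Real.pi * B / (Real.sqrt ((n : ℝ) * N / M) * c) : ℝ) : ℂ) * (n : ℂ)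
      = ((2 * Real.pi * B / (Real.sqrt ((M : ℝ) * N / n) * c) : ℝ) : ℂ) * (M : ℂ) := by
    exact_mod_cast congrArg Complex.ofReal cross
  linear_combination kloosterman c N n M * crossC
end
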